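/- Fix integers e > r ≥ 2 and 1 ≤ i ≤ r−1. Let μ = (μ₁,...,μ_r) be a weak composition of w with μ_i ≠ μ_{i+1}, and consider beta numbers β_t = μ_t·e + (e − r + t − 1) for 1 ≤ t ≤ r, sorted in decreasing order. Let β'_t be the beta numbers similarly built from μσ_i (μ with entries i and i+1 swapped). Then for all positive roots α of sl_r, the quantities ⌊⟨α^∨, Ω⟩/e⌋ computed from β and from β' agree except for exactly one positive root, for which they differ by exactly 1. -/

import Mathlib

/-- For a weak composition μ of w of length r, the beta numbers
β_t = μ_t·e + (e − r + t − 1) (1 ≤ t ≤ r; here 0-based t with residue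
e − r + t), sorted in decreasing order. -/
def sortedBetasDesc (e r : ℕ) (μ : ℕ → ℕ) : List ℕ :=
  ((((Finset.range r).val.map (fun t => μ t * e + (e - r + t))).sort
    (· ≤ ·))).reverse

namespace WallCrossAux

def swapFn (μ : ℕ → ℕ) (i : ℕ) : ℕ → ℕ :=
  fun t => if t = i then μ (i + 1) else if t = i + 1 then μ i else μ t

def ψfn (e r i : ℕ) (μ : ℕ → ℕ) : ℕ → ℕ := fun v =>
  if v = μ i * e + (e - r + i) then μ i * e + (e - r + i) + 1
  else if v = μ (i + 1) * e + (e - r + (i + 1)) then μ (i + 1) * e + (e - r + (i + 1)) - 1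
  else v

def shiK (e r : ℕ) (μ : ℕ → ℕ) (x y : ℕ) : ℤ :=
  (((sortedBetasDesc e r μ).getD x 0 : ℤ) - ((sortedBetasDesc e r μ).getD y 0 : ℤ)).fdiv e

lemma swap_swap (μ : ℕ → ℕ) (i : ℕ) : swapFn (swapFn μ i) i = μ := by
  funext t
  simp only [swapFn]
  by_cases h1 : t = i <;> by_cases h2 : t = i + 1 <;>
    simp [h1, h2, Nat.succ_ne_self] <;> omega

lemma fdiv_succ {e n : ℤ} (he : 0 < e) (hnd : ¬ e ∣ (n + 1)) :
    (n + 1).fdiv e = n.fdiv e := by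
  rw [Int.fdiv_eq_ediv_of_nonneg _ he.le, Int.fdiv_eq_ediv_of_nonneg _ he.le]
  have hs : 0 ≤ n % e := Int.emod_nonneg n he.ne'
  have hs2 : n % e < e := Int.emod_lt_of_pos n he
  have hed : e * (n / e) + n % e = n := Int.mul_ediv_add_emod n e
  have hslt : n % e + 1 < e := by
    rcases lt_or_eq_of_le (by omega : n % e + 1 ≤ e) with h | h
    · exact h
    · exact absurd ⟨n / e + 1, by rw [mul_add, mul_one]; linarith⟩ hnd
  have h1 : n + 1 = (n % e + 1) + e * (n / e) := by linarith
  rw [h1, Int.add_mul_ediv_left _ _ he.ne',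
    Int.ediv_eq_zero_of_lt (by omega) hslt, zero_add]

lemma fdiv_add_two {e n : ℤ} (he : 1 < e) (hd : e ∣ (n + 1)) :
    (n + 2).fdiv e = n.fdiv e + 1 := by
  have he0 : 0 < e := by omega
  obtain ⟨m, hm⟩ := hd
  rw [Int.fdiv_eq_ediv_of_nonneg _ he0.le, Int.fdiv_eq_ediv_of_nonneg _ he0.le]
  have h2 : n + 2 = 1 + e * m := by omega
  have h0 : n = (e - 1) + e * (m - 1) := by rw [show e * (m-1) = e*m - e by ring]; omega
  rw [h2, Int.add_mul_ediv_left _ _ he0.ne', Int.ediv_eq_zero_of_lt (by omega) (by omega),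
    zero_add, h0, Int.add_mul_ediv_left _ _ he0.ne',
    Int.ediv_eq_zero_of_lt (by omega) (by omega), zero_add]
  ring

variable {e r i : ℕ} {μ : ℕ → ℕ}

lemma mod_gen {e : ℕ} (m s : ℕ) (hs : s < e) : (m * e + s) % e = s := by
  rw [mul_comm m e, Nat.mul_add_mod, Nat.mod_eq_of_lt hs]

lemma mod_beta (hre : r < e) {t : ℕ} (ht : t < r) :
    (μ t * e + (e - r + t)) % e = e - r + t := mod_gen _ _ (by omega)

lemma length_sbd : (sortedBetasDesc e r μ).length = r := by
  rw [sortedBetasDesc, List.length_reverse, Multiset.length_sort]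
  simp

lemma mem_sbd {v : ℕ} :
    v ∈ sortedBetasDesc e r μ ↔ ∃ t, t < r ∧ v = μ t * e + (e - r + t) := by
  rw [sortedBetasDesc, List.mem_reverse, Multiset.mem_sort]
  simp [eq_comm]

lemma nodup_sbd (hre : r < e) : (sortedBetasDesc e r μ).Nodup := by
  rw [sortedBetasDesc, List.nodup_reverse, ← Multiset.coe_nodup, Multiset.sort_eq]
  refine Multiset.Nodup.map_on ?_ (Finset.range r).nodup
  intro s hs t ht h
  simp only [Finset.mem_val, Finset.mem_range] at hs ht
  have h2 := congrArg (· % e) h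
  simp only [mod_beta (μ := μ) hre hs, mod_beta (μ := μ) hre ht] at h2
  omega

lemma sorted_sbd (hre : r < e) : (sortedBetasDesc e r μ).Pairwise (· > ·) := by
  have h1 : ((((Finset.range r).val.map (fun t => μ t * e + (e - r + t))).sort
      (· ≤ ·))).Pairwise (· < ·) := by
    refine ((Multiset.pairwise_sort _ _).and (?_ : List.Nodup _)).imp (fun h => lt_of_le_of_ne h.1 h.2)
    have := nodup_sbd (μ := μ) hre
    rwa [sortedBetasDesc, List.nodup_reverse] at this
  rw [sortedBetasDesc, List.pairwise_reverse]
  exact h1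

lemma hres_idx (hre : r < e) {j : ℕ} (hj : j < r) {v : ℕ}
    (hv : v ∈ sortedBetasDesc e r μ) (hm : v % e = e - r + j) :
    v = μ j * e + (e - r + j) := by
  obtain ⟨t, ht, rfl⟩ := mem_sbd.1 hv
  rw [mod_beta hre ht] at hm
  have : t = j := by omega
  rw [this]

lemma hBC (h : μ (i + 1) < μ i) (hre : r < e) (hr : 2 ≤ r) :
    μ (i + 1) * e + (e - r + (i + 1)) + 2 ≤ μ i * e + (e - r + i) := by
  have h1 : (μ (i + 1) + 1) * e ≤ μ i * e := Nat.mul_le_mul_right e h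
  rw [add_mul, one_mul] at h1
  omega

lemma ψ_eval_B : ψfn e r i μ (μ i * e + (e - r + i)) = μ i * e + (e - r + i) + 1 := by
  simp [ψfn]

lemma ψ_eval_C (hne : μ (i + 1) * e + (e - r + (i + 1)) ≠ μ i * e + (e - r + i)) :
    ψfn e r i μ (μ (i + 1) * e + (e - r + (i + 1)))
      = μ (i + 1) * e + (e - r + (i + 1)) - 1 := by
  simp only [ψfn]
  rw [if_neg hne]
  simp

lemma ψ_eval_other {v : ℕ} (h1 : v ≠ μ i * e + (e - r + i))
    (h2 : v ≠ μ (i + 1) * e + (e - r + (i + 1))) : ψfn e r i μ v = v := by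
  simp only [ψfn]
  rw [if_neg h1, if_neg h2]

lemma core (e r p q B C : ℕ) (a a' : ℕ → ℕ)
    (he : 3 ≤ e)
    (hp : p < r) (hq : q < r) (hpq : p < q)
    (hBC : C + 2 ≤ B)
    (ha' : ∀ x, x < r → a' x = if a x = B then B + 1 else if a x = C then C - 1 else a x)
    (haB : a p = B) (haC : a q = C)
    (huB : ∀ x, x < r → a x % e = B % e → x = p)
    (huC : ∀ x, x < r → a x % e = C % e → x = q)
    (hmodC : C % e = B % e + 1) (hBlt : B % e + 1 < e) (hC1 : 1 ≤ C) :
    ((a' p : ℤ) - (a' q : ℤ)).fdiv e = ((a p : ℤ) - (a q : ℤ)).fdiv e + 1 ∧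
    ∀ x' y', x' < y' → y' < r → (x', y') ≠ (p, q) →
      ((a x' : ℤ) - (a y' : ℤ)).fdiv e = ((a' x' : ℤ) - (a' y' : ℤ)).fdiv e := by
  have heZ : 1 < (e : ℤ) := by exact_mod_cast (by omega : 1 < e)
  have heZ0 : 0 < (e : ℤ) := by omega
  have hBd : e * (B / e) + B % e = B := Nat.div_add_mod B e
  have hCd : e * (C / e) + C % e = C := Nat.div_add_mod C e
  have hmodB1 : (B + 1) % e = C % e := by
    have h1 : B + 1 = e * (B / e) + (B % e + 1) := by
      rw [← Nat.add_assoc, hBd]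
    rw [h1, Nat.mul_add_mod, Nat.mod_eq_of_lt hBlt, hmodC]
  have hmodC1 : (C - 1) % e = B % e := by
    have h0 : C = e * (C / e) + B % e + 1 := by
      rw [Nat.add_assoc, ← hmodC, hCd]
    have h1 : C - 1 = e * (C / e) + B % e := Nat.sub_eq_of_eq_add h0
    rw [h1, Nat.mul_add_mod, Nat.mod_eq_of_lt (by omega)]
  have haxB : ∀ x, x < r → (a x = B ↔ x = p) := fun x hx =>
    ⟨fun hv => huB x hx (by rw [hv]), fun hv => by rw [hv, haB]⟩
  have haxC : ∀ x, x < r → (a x = C ↔ x = q) := fun x hx =>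
    ⟨fun hv => huC x hx (by rw [hv]), fun hv => by rw [hv, haC]⟩
  have dvd_mod : ∀ (u v : ℕ), (e : ℤ) ∣ (u : ℤ) - (v : ℤ) → u % e = v % e := by
    intro u v hdvd
    have h2 : Nat.ModEq e v u := Nat.modEq_iff_dvd.2 hdvd
    exact h2.symm
  constructor
  · rw [ha' p hp, ha' q hq, haB, haC, if_pos rfl, if_neg (by omega : ¬ C = B), if_pos rfl]
    have hc1 : ((B + 1 : ℕ) : ℤ) - ((C - 1 : ℕ) : ℤ) = ((B : ℤ) - (C : ℤ)) + 2 := by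
      push_cast [hC1]
      ring
    rw [hc1]
    refine fdiv_add_two heZ ⟨((B / e : ℕ) : ℤ) - ((C / e : ℕ) : ℤ), ?_⟩
    have hBd' : (e : ℤ) * ((B / e : ℕ) : ℤ) + ((B % e : ℕ) : ℤ) = (B : ℤ) := by
      exact_mod_cast hBd
    have hCd' : (e : ℤ) * ((C / e : ℕ) : ℤ) + ((C % e : ℕ) : ℤ) = (C : ℤ) := by
      exact_mod_cast hCd
    have hmodC' : ((C % e : ℕ) : ℤ) = ((B % e : ℕ) : ℤ) + 1 := by exact_mod_cast hmodC
    linear_combination -hBd' + hCd' - hmodC'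
  · intro x' y' hxy hy' hneq
    have hx' : x' < r := by omega
    rw [ha' x' hx', ha' y' hy']
    by_cases hx'p : x' = p
    · have hy'q : y' ≠ q := fun hcon => hneq (by rw [hx'p, hcon])
      have hy'p : y' ≠ p := by omega
      rw [if_pos ((haxB x' hx').2 hx'p), hx'p, haB,
        if_neg (fun hc => hy'p ((haxB y' hy').1 hc)),
        if_neg (fun hc => hy'q ((haxC y' hy').1 hc))]
      have hc1 : ((B + 1 : ℕ) : ℤ) - ((a y' : ℕ) : ℤ)
          = ((B : ℤ) - (a y' : ℤ)) + 1 := by push_cast; ring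
      rw [hc1]
      refine (fdiv_succ heZ0 ?_).symm
      intro hdvd
      have h2 : (e : ℤ) ∣ ((B + 1 : ℕ) : ℤ) - ((a y' : ℕ) : ℤ) := by rw [hc1]; exact hdvd
      have h3 := dvd_mod _ _ h2
      rw [hmodB1] at h3
      exact hy'q (huC y' hy' h3.symm)
    · by_cases hy'p : y' = p
      · have hx'q : x' ≠ q := by omega
        rw [if_pos ((haxB y' hy').2 hy'p), hy'p, haB,
          if_neg (fun hc => hx'p ((haxB x' hx').1 hc)),
          if_neg (fun hc => hx'q ((haxC x' hx').1 hc))]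
        have hc1 : ((a x' : ℕ) : ℤ) - ((B : ℕ) : ℤ)
            = ((a x' : ℤ) - (B : ℤ) - 1) + 1 := by ring
        have hc2 : ((a x' : ℕ) : ℤ) - ((B + 1 : ℕ) : ℤ)
            = (a x' : ℤ) - (B : ℤ) - 1 := by push_cast; ring
        rw [hc1, hc2]
        refine fdiv_succ heZ0 ?_
        intro hdvd
        have h2 : (e : ℤ) ∣ ((a x' : ℕ) : ℤ) - ((B : ℕ) : ℤ) := by rw [hc1]; exact hdvd
        exact hx'p (huB x' hx' (dvd_mod _ _ h2))
      · by_cases hx'q : x' = q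
        · have hy'q : y' ≠ q := by omega
          rw [if_neg (fun hc => hx'p ((haxB x' hx').1 hc)),
            if_pos ((haxC x' hx').2 hx'q), hx'q, haC,
            if_neg (fun hc => hy'p ((haxB y' hy').1 hc)),
            if_neg (fun hc => hy'q ((haxC y' hy').1 hc))]
          have hc1 : ((C : ℕ) : ℤ) - ((a y' : ℕ) : ℤ)
              = (((C - 1 : ℕ) : ℤ) - (a y' : ℤ)) + 1 := by push_cast [hC1]; ring
          rw [hc1]
          refine fdiv_succ heZ0 ?_
          intro hdvd
          have h2 : (e : ℤ) ∣ ((C : ℕ) : ℤ) - ((a y' : ℕ) : ℤ) := by rw [hc1]; exact hdvd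
          have h3 := dvd_mod _ _ h2
          exact hy'q (huC y' hy' h3.symm)
        · by_cases hy'q : y' = q
          · rw [if_neg (fun hc => hx'p ((haxB x' hx').1 hc)),
              if_neg (fun hc => hx'q ((haxC x' hx').1 hc)),
              if_neg (fun hc => hy'p ((haxB y' hy').1 hc)),
              if_pos ((haxC y' hy').2 hy'q), hy'q, haC]
            have hc1 : ((a x' : ℕ) : ℤ) - ((C - 1 : ℕ) : ℤ)
                = (((a x' : ℕ) : ℤ) - ((C : ℕ) : ℤ)) + 1 := by push_cast [hC1]; ring
            rw [hc1]
            refine (fdiv_succ heZ0 ?_).symm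
            intro hdvd
            have h2 : (e : ℤ) ∣ ((a x' : ℕ) : ℤ) - ((C - 1 : ℕ) : ℤ) := by
              rw [hc1]; exact hdvd
            have h3 := dvd_mod _ _ h2
            rw [hmodC1] at h3
            exact hx'p (huB x' hx' h3)
          · rw [if_neg (fun hc => hx'p ((haxB x' hx').1 hc)),
              if_neg (fun hc => hx'q ((haxC x' hx').1 hc)),
              if_neg (fun hc => hy'p ((haxB y' hy').1 hc)),
              if_neg (fun hc => hy'q ((haxC y' hy').1 hc))]

lemma map_eq (hr : 2 ≤ r) (hre : r < e) (hi : i + 1 < r) (h : μ (i + 1) < μ i) :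
    sortedBetasDesc e r (swapFn μ i) = (sortedBetasDesc e r μ).map (ψfn e r i μ) := by
  have he3 : 3 ≤ e := by omega
  have hbc := hBC h hre hr
  have hm' : (Finset.range r).val.map (fun t => swapFn μ i t * e + (e - r + t))
      = ((Finset.range r).val.map (fun t => μ t * e + (e - r + t))).map (ψfn e r i μ) := by
    rw [Multiset.map_map]
    have hσfin : Finset.map (Equiv.swap i (i + 1)).toEmbedding (Finset.range r)
        = Finset.range r := by
      ext a
      simp only [Finset.mem_map_equiv, Finset.mem_range, Equiv.symm_swap,
        Equiv.swap_apply_def]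
      split_ifs <;> omega
    have hσ := congrArg Finset.val hσfin
    rw [Finset.map_val] at hσ
    conv_lhs => rw [← hσ, Multiset.map_map]
    refine Multiset.map_congr rfl ?_
    intro t ht
    simp only [Finset.mem_val, Finset.mem_range] at ht
    simp only [Function.comp_apply, Equiv.coe_toEmbedding]
    by_cases h1 : t = i
    · rw [h1, Equiv.swap_apply_left]
      have e1 : swapFn μ i (i + 1) = μ i := by simp [swapFn, Nat.succ_ne_self]
      rw [e1, ψ_eval_B]
      omega
    · by_cases h2 : t = i + 1
      · rw [h2, Equiv.swap_apply_right]
        have e1 : swapFn μ i i = μ (i + 1) := by simp [swapFn]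
        rw [e1, ψ_eval_C (by omega)]
        omega
      · rw [Equiv.swap_apply_of_ne_of_ne h1 h2]
        have hne1 : μ t * e + (e - r + t) ≠ μ i * e + (e - r + i) := by
          intro hcon
          have := congrArg (· % e) hcon
          simp only [mod_beta (μ := μ) hre ht,
            mod_beta (μ := μ) hre (by omega : i < r)] at this
          omega
        have hne2 : μ t * e + (e - r + t) ≠ μ (i + 1) * e + (e - r + (i + 1)) := by
          intro hcon
          have := congrArg (· % e) hcon
          simp only [mod_beta (μ := μ) hre ht, mod_beta (μ := μ) hre hi] at this
          omega
        rw [ψ_eval_other hne1 hne2]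
        simp only [swapFn, if_neg h1, if_neg h2]
  have hperm : (sortedBetasDesc e r (swapFn μ i)).Perm
      ((sortedBetasDesc e r μ).map (ψfn e r i μ)) := by
    rw [← Multiset.coe_eq_coe]
    have e1 : ((sortedBetasDesc e r (swapFn μ i) : List ℕ) : Multiset ℕ)
        = (Finset.range r).val.map (fun t => swapFn μ i t * e + (e - r + t)) := by
      rw [sortedBetasDesc, Multiset.coe_reverse, Multiset.sort_eq]
    have e2 : (((sortedBetasDesc e r μ).map (ψfn e r i μ) : List ℕ) : Multiset ℕ)
        = ((Finset.range r).val.map (fun t => μ t * e + (e - r + t))).map (ψfn e r i μ) := by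
      rw [← Multiset.map_coe, sortedBetasDesc, Multiset.coe_reverse, Multiset.sort_eq]
    rw [e1, e2, hm']
  have hsort : (sortedBetasDesc e r μ).Pairwise (· > ·) := sorted_sbd hre
  have hmapsort : ((sortedBetasDesc e r μ).map (ψfn e r i μ)).Pairwise (· > ·) := by
    rw [List.pairwise_map]
    refine hsort.imp_of_mem ?_
    intro a b ha hb hab
    by_cases h1 : a = μ i * e + (e - r + i)
    · rw [h1, ψ_eval_B]
      rw [h1] at hab
      by_cases h2 : b = μ (i + 1) * e + (e - r + (i + 1))
      · rw [h2, ψ_eval_C (by omega)]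
        omega
      · rw [ψ_eval_other (by omega) h2]
        omega
    · by_cases h2 : a = μ (i + 1) * e + (e - r + (i + 1))
      · rw [h2, ψ_eval_C (by omega)]
        rw [h2] at hab
        have hb1 : b ≠ μ i * e + (e - r + i) := by omega
        have hb2 : b ≠ μ (i + 1) * e + (e - r + (i + 1)) := by omega
        rw [ψ_eval_other hb1 hb2]
        have hb3 : b ≠ μ (i + 1) * e + (e - r + (i + 1)) - 1 := by
          intro hcon
          have h4 : b % e = e - r + i := by
            rw [show b = μ (i + 1) * e + (e - r + i) by omega]
            exact mod_gen _ _ (by omega)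
          have := hres_idx hre (by omega : i < r) hb h4
          omega
        omega
      · rw [ψ_eval_other h1 h2]
        by_cases h3 : b = μ i * e + (e - r + i)
        · rw [h3, ψ_eval_B]
          rw [h3] at hab
          have ha3 : a ≠ μ i * e + (e - r + i) + 1 := by
            intro hcon
            have h4 : a % e = e - r + (i + 1) := by
              rw [show a = μ i * e + (e - r + (i + 1)) by omega]
              exact mod_gen _ _ (by omega)
            have := hres_idx hre hi ha h4
            omega
          omega
        · by_cases h4 : b = μ (i + 1) * e + (e - r + (i + 1))
          · rw [h4, ψ_eval_C (by omega)]
            rw [h4] at hab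
            omega
          · rw [ψ_eval_other h3 h4]
            exact hab
  haveI : Std.Antisymm (α := ℕ) (· > ·) := ⟨fun a b h1 h2 => (lt_asymm h1 h2).elim⟩
  exact List.Perm.eq_of_pairwise' (sorted_sbd hre) hmapsort hperm


lemma main_lemma (e r i : ℕ) (hr : 2 ≤ r) (hre : r < e) (hi : i + 1 < r) (μ : ℕ → ℕ)
    (h : μ (i + 1) < μ i) :
    ∃ x y, x < y ∧ y < r ∧
      shiK e r (swapFn μ i) x y = shiK e r μ x y + 1 ∧
      ∀ x' y', x' < y' → y' < r → (x', y') ≠ (x, y) →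
        shiK e r μ x' y' = shiK e r (swapFn μ i) x' y' := by
  have he3 : 3 ≤ e := by omega
  have hbc := hBC h hre hr
  have hlen : (sortedBetasDesc e r μ).length = r := length_sbd
  have hnd := nodup_sbd (μ := μ) hre
  have hsort := sorted_sbd (μ := μ) hre
  have hmap := map_eq hr hre hi h
  obtain ⟨p, hp, hgp⟩ := List.mem_iff_getElem.1
    (mem_sbd.2 ⟨i, by omega, rfl⟩ : μ i * e + (e - r + i) ∈ sortedBetasDesc e r μ)
  obtain ⟨q, hq, hgq⟩ := List.mem_iff_getElem.1
    (mem_sbd.2 ⟨i + 1, hi, rfl⟩ :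
      μ (i + 1) * e + (e - r + (i + 1)) ∈ sortedBetasDesc e r μ)
  have hp' : p < r := hlen ▸ hp
  have hq' : q < r := hlen ▸ hq
  have hpairs := List.pairwise_iff_getElem.1 hsort
  have hpq : p < q := by
    rcases lt_trichotomy p q with h' | h' | h'
    · exact h'
    · exfalso
      subst h'
      rw [hgp] at hgq
      omega
    · have := hpairs q p hq hp h'
      rw [hgp, hgq] at this
      omega
  have hgetD : ∀ x (hx : x < r),
      (sortedBetasDesc e r μ).getD x 0 = (sortedBetasDesc e r μ)[x]'(by omega) :=
    fun x hx => List.getD_eq_getElem _ _ _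
  have hgetD' : ∀ x (hx : x < r), (sortedBetasDesc e r (swapFn μ i)).getD x 0
      = ψfn e r i μ ((sortedBetasDesc e r μ)[x]'(by omega)) := by
    intro x hx
    rw [hmap, List.getD_eq_getElem _ _ (by rw [List.length_map]; omega), List.getElem_map]
  have ha' : ∀ x, x < r → (sortedBetasDesc e r (swapFn μ i)).getD x 0
      = if (sortedBetasDesc e r μ).getD x 0 = μ i * e + (e - r + i)
          then μ i * e + (e - r + i) + 1
        else if (sortedBetasDesc e r μ).getD x 0 = μ (i + 1) * e + (e - r + (i + 1))
          then μ (i + 1) * e + (e - r + (i + 1)) - 1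
        else (sortedBetasDesc e r μ).getD x 0 := by
    intro x hx
    rw [hgetD x hx, hgetD' x hx]
    simp only [ψfn]
  have haB : (sortedBetasDesc e r μ).getD p 0 = μ i * e + (e - r + i) := by
    rw [hgetD p hp']
    exact hgp
  have haC : (sortedBetasDesc e r μ).getD q 0 = μ (i + 1) * e + (e - r + (i + 1)) := by
    rw [hgetD q hq']
    exact hgq
  have hmodB : (μ i * e + (e - r + i)) % e = e - r + i := mod_beta hre (by omega)
  have hmodCv : (μ (i + 1) * e + (e - r + (i + 1))) % e = e - r + (i + 1) :=
    mod_beta hre hi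
  have huB : ∀ x, x < r → (sortedBetasDesc e r μ).getD x 0 % e
      = (μ i * e + (e - r + i)) % e → x = p := by
    intro x hx hm
    rw [hgetD x hx, hmodB] at hm
    have hv := hres_idx hre (by omega : i < r) (List.getElem_mem _) hm
    have := hv.trans hgp.symm
    exact (hnd.getElem_inj_iff).1 this
  have huC : ∀ x, x < r → (sortedBetasDesc e r μ).getD x 0 % e
      = (μ (i + 1) * e + (e - r + (i + 1))) % e → x = q := by
    intro x hx hm
    rw [hgetD x hx, hmodCv] at hm
    have hv := hres_idx hre hi (List.getElem_mem _) hm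
    have := hv.trans hgq.symm
    exact (hnd.getElem_inj_iff).1 this
  have hmodsucc : (μ (i + 1) * e + (e - r + (i + 1))) % e
      = (μ i * e + (e - r + i)) % e + 1 := by
    rw [hmodB, hmodCv]
    omega
  have hBlt : (μ i * e + (e - r + i)) % e + 1 < e := by
    rw [hmodB]
    omega
  have hC1 : 1 ≤ μ (i + 1) * e + (e - r + (i + 1)) := by omega
  obtain ⟨h1, h2⟩ := core e r p q (μ i * e + (e - r + i))
    (μ (i + 1) * e + (e - r + (i + 1)))
    (fun x => (sortedBetasDesc e r μ).getD x 0)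
    (fun x => (sortedBetasDesc e r (swapFn μ i)).getD x 0)
    he3 hp' hq' hpq hbc ha' haB haC huB huC hmodsucc hBlt hC1
  exact ⟨p, q, hpq, hq', h1, h2⟩

end WallCrossAux

theorem wall_crossing_finite_reflection (e r w i : ℕ) (hr : 2 ≤ r)
    (hre : r < e) (hi : i + 1 < r) (μ : ℕ → ℕ)
    (hμ : ∑ t ∈ Finset.range r, μ t = w) (hne : μ i ≠ μ (i + 1)) :
    let μ' : ℕ → ℕ := fun t =>
      if t = i then μ (i + 1) else if t = i + 1 then μ i else μ t
    let l := sortedBetasDesc e r μ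
    let l' := sortedBetasDesc e r μ'
    let K : ℕ → ℕ → ℤ := fun x y => ((l.getD x 0 : ℤ) - (l.getD y 0 : ℤ)).fdiv e
    let K' : ℕ → ℕ → ℤ := fun x y =>
      ((l'.getD x 0 : ℤ) - (l'.getD y 0 : ℤ)).fdiv e
    ∃ x y, x < y ∧ y < r ∧
      (K x y = K' x y + 1 ∨ K' x y = K x y + 1) ∧
      ∀ x' y', x' < y' → y' < r → (x', y') ≠ (x, y) → K x' y' = K' x' y' := by
  intro μ' l l' K K'
  rcases lt_or_gt_of_ne hne with hlt | hgt
  · obtain ⟨x, y, hxy, hy, hmain, hall⟩ :=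
      WallCrossAux.main_lemma e r i hr hre hi (WallCrossAux.swapFn μ i)
        (by simp [WallCrossAux.swapFn, Nat.succ_ne_self]; exact hlt)
    rw [WallCrossAux.swap_swap] at hmain hall
    exact ⟨x, y, hxy, hy, Or.inl hmain,
      fun x' y' h1 h2 h3 => (hall x' y' h1 h2 h3).symm⟩
  · obtain ⟨x, y, hxy, hy, hmain, hall⟩ :=
      WallCrossAux.main_lemma e r i hr hre hi μ hgt
    exact ⟨x, y, hxy, hy, Or.inr hmain, hall⟩
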